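/- arXiv:1004.0360 — 2 statements merged into one kernel-verified Lean document; each statement's English description precedes it below -/
import Mathlib

section
/- For every prime p and every s ∈ ℂ^n with Re(s_i) > 2 for i = 1,…,n, the series Σ_{ν ∈ ℕ^n} φ(p^{ν_1+⋯+ν_n})·p^{−(ν_1 s_1 + ⋯ + ν_n s_n)} converges absolutely and equals (∏_{i=1}^n (1 − p^{1−s_i})^{−1}) · (1 − 1/p + (1/p)·∏_{i=1}^n (1 − p^{1−s_i})). -/
open Complex

noncomputable section

private lemma pi_hasSum_aux {n : ℕ} (f : Fin n → ℕ → ℂ) (T : Fin n → ℂ)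
    (hnorm : ∀ i, Summable fun k => ‖f i k‖)
    (hsum : ∀ i, HasSum (f i) (T i)) :
    Summable (fun ν : Fin n → ℕ => ∏ i, ‖f i (ν i)‖) ∧
      HasSum (fun ν : Fin n → ℕ => ∏ i, f i (ν i)) (∏ i, T i) := by
  induction n with
  | zero =>
      constructor
      · simpa using (hasSum_fintype (fun ν : Fin 0 → ℕ => ∏ i, ‖f i (ν i)‖)).summable
      · simpa using hasSum_fintype (fun ν : Fin 0 → ℕ => ∏ i, f i (ν i))
  | succ n ih =>
      obtain ⟨hS0, hH0⟩ := ih (fun i => f i.succ) (fun i => T i.succ)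
        (fun i => hnorm i.succ) (fun i => hsum i.succ)
      have hS : Summable (fun ν : Fin n → ℕ => ∏ i, ‖f i.succ (ν i)‖) :=
        hS0.congr fun ν => rfl
      have hH : HasSum (fun ν : Fin n → ℕ => ∏ i, f i.succ (ν i)) (∏ i : Fin n, T i.succ) :=
        hH0.congr_fun fun ν => rfl
      set e : (ℕ × (Fin n → ℕ)) ≃ (Fin (n + 1) → ℕ) := Fin.consEquiv (fun _ => ℕ) with he
      have Hn := Summable.mul_of_nonneg (hnorm 0) hS (fun k => norm_nonneg _)
        (fun μ => Finset.prod_nonneg fun i _ => norm_nonneg _)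
      have hprodnorm :
          Summable (fun x : ℕ × (Fin n → ℕ) => ‖f 0 x.1‖ * ∏ i, ‖f i.succ (x.2 i)‖) :=
        Hn.congr fun x => rfl
      have hC : Summable (fun x : ℕ × (Fin n → ℕ) => f 0 x.1 * ∏ i, f i.succ (x.2 i)) := by
        apply Summable.of_norm
        apply hprodnorm.congr
        intro x
        simp [norm_prod]
      have Hm := (hsum 0).mul hH (hC.congr fun x => rfl)
      have hmul : HasSum (fun x : ℕ × (Fin n → ℕ) => f 0 x.1 * ∏ i, f i.succ (x.2 i))
          (T 0 * ∏ i : Fin n, T i.succ) := Hm.congr_fun fun x => rfl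
      have keyN : ∀ x : ℕ × (Fin n → ℕ),
          (∏ i, ‖f i (e x i)‖) = ‖f 0 x.1‖ * ∏ i, ‖f i.succ (x.2 i)‖ := by
        intro x
        simp [he, Fin.consEquiv, Fin.prod_univ_succ]
      have keyC : ∀ x : ℕ × (Fin n → ℕ),
          (∏ i, f i (e x i)) = f 0 x.1 * ∏ i, f i.succ (x.2 i) := by
        intro x
        simp [he, Fin.consEquiv, Fin.prod_univ_succ]
      constructor
      · rw [← e.summable_iff]
        exact hprodnorm.congr fun x => (keyN x).symm
      · rw [← e.hasSum_iff]
        rw [Fin.prod_univ_succ]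
        have hfn : (fun x : ℕ × (Fin n → ℕ) => ∏ i, f i (e x i)) =
            fun x => f 0 x.1 * ∏ i, f i.succ (x.2 i) := funext keyC
        show HasSum (fun x : ℕ × (Fin n → ℕ) => ∏ i, f i (e x i)) _
        rw [hfn]
        exact hmul

theorem statement13 (n : ℕ) (hn : 1 ≤ n) (p : ℕ) (hp : p.Prime)
    (s : Fin n → ℂ) (hs : ∀ i, 2 < (s i).re) :
    Summable (fun ν : Fin n → ℕ =>
      ‖(Nat.totient (p ^ (∑ i, ν i)) : ℂ) * (p : ℂ) ^ (-(∑ i, (ν i : ℂ) * s i))‖) ∧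
    HasSum (fun ν : Fin n → ℕ =>
        (Nat.totient (p ^ (∑ i, ν i)) : ℂ) * (p : ℂ) ^ (-(∑ i, (ν i : ℂ) * s i)))
      ((∏ i, (1 - (p : ℂ) ^ ((1 : ℂ) - s i))⁻¹) *
        (1 - 1 / (p : ℂ) + (1 / (p : ℂ)) * ∏ i, (1 - (p : ℂ) ^ ((1 : ℂ) - s i)))) := by
  have hp0 : (0 : ℕ) < p := hp.pos
  have hp1 : (1 : ℝ) < (p : ℝ) := by exact_mod_cast hp.one_lt
  have hpC : (p : ℂ) ≠ 0 := by
    exact_mod_cast hp.pos.ne'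
  set L : ℂ := Complex.log p with hL
  have hexpL : Complex.exp L = (p : ℂ) := Complex.exp_log hpC
  set x : Fin n → ℂ := fun i => (p : ℂ) ^ ((1 : ℂ) - s i) with hx
  have hxnorm : ∀ i, ‖x i‖ < 1 := by
    intro i
    rw [hx]
    simp only
    rw [Complex.norm_natCast_cpow_of_pos hp0]
    apply Real.rpow_lt_one_of_one_lt_of_neg hp1
    have := hs i
    simp only [Complex.sub_re, Complex.one_re]
    linarith
  set f : Fin n → ℕ → ℂ := fun i k => x i ^ k with hf
  have hnorm : ∀ i, Summable fun k => ‖f i k‖ := by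
    intro i
    simp only [hf, norm_pow]
    exact summable_geometric_of_lt_one (norm_nonneg _) (hxnorm i)
  have hsum : ∀ i, HasSum (f i) ((1 - x i)⁻¹) := fun i =>
    hasSum_geometric_of_norm_lt_one (hxnorm i)
  obtain ⟨hS, hH⟩ := pi_hasSum_aux f _ hnorm hsum
  have key : ∀ ν : Fin n → ℕ,
      (Nat.totient (p ^ (∑ i, ν i)) : ℂ) * (p : ℂ) ^ (-(∑ i, (ν i : ℂ) * s i)) =
        (1 - 1 / (p : ℂ)) * ∏ i, f i (ν i) + (if ν = 0 then 1 / (p : ℂ) else 0) := by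
    intro ν
    have hxexp : ∀ i, x i = Complex.exp (L * (1 - s i)) := by
      intro i
      rw [hx]
      simp only
      rw [Complex.cpow_def_of_ne_zero hpC, hL]
    have hprod : ∏ i, f i (ν i) =
        Complex.exp (L * (∑ i, (ν i : ℂ)) - L * ∑ i, (ν i : ℂ) * s i) := by
      simp only [hf]
      have hterm : ∀ i, x i ^ ν i = Complex.exp ((ν i : ℂ) * (L * (1 - s i))) := by
        intro i
        rw [hxexp i, ← Complex.exp_nat_mul]
      simp only [hterm]
      rw [← Complex.exp_sum]
      congr 1
      rw [Finset.mul_sum, Finset.mul_sum, ← Finset.sum_sub_distrib]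
      apply Finset.sum_congr rfl
      intro i _
      ring
    have hcpow : (p : ℂ) ^ (-(∑ i, (ν i : ℂ) * s i)) =
        Complex.exp (L * (-(∑ i, (ν i : ℂ) * s i))) := by
      rw [Complex.cpow_def_of_ne_zero hpC, hL]
    by_cases h0 : ν = 0
    · subst h0
      simp only [Pi.zero_apply, Nat.cast_zero, zero_mul, Finset.sum_const_zero, pow_zero,
        Nat.totient_one, Nat.cast_one, neg_zero, Complex.cpow_zero, mul_one,
        if_pos rfl, hf, Finset.prod_const_one]
      norm_num
    · rw [if_neg h0, add_zero]
      set K : ℕ := ∑ i, ν i with hK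
      have hKpos : 0 < K := by
        rcases Function.ne_iff.mp h0 with ⟨i, hi⟩
        have hpos : 0 < ν i := Nat.pos_of_ne_zero (by simpa using hi)
        exact lt_of_lt_of_le hpos (Finset.single_le_sum (fun j _ => Nat.zero_le _)
          (Finset.mem_univ i))
      have hKsum : ((K : ℂ)) = ∑ i, (ν i : ℂ) := by
        rw [hK]; push_cast; ring
      rw [Nat.totient_prime_pow hp hKpos]
      have hcast : ((p ^ (K - 1) * (p - 1) : ℕ) : ℂ) = (p : ℂ) ^ (K - 1) * ((p : ℂ) - 1) := by
        push_cast [Nat.cast_sub hp.one_lt.le]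
        ring
      rw [hcast, hprod, hcpow]
      have hpowK : (p : ℂ) ^ (K - 1) = Complex.exp (((K : ℂ) - 1) * L) := by
        rw [← hexpL, ← Complex.exp_nat_mul]
        congr 1
        push_cast [Nat.cast_sub hKpos]
        ring
      have hinv : 1 - 1 / (p : ℂ) = ((p : ℂ) - 1) * Complex.exp (-L) := by
        rw [Complex.exp_neg, hexpL]
        field_simp
      rw [hpowK, hinv, hKsum]
      have gen : ∀ (c a b d : ℂ), a + b = d →
          Complex.exp a * c * Complex.exp b = c * Complex.exp d := by
        intro c a b d h
        rw [← h, Complex.exp_add]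
        ring
      conv_rhs => rw [mul_assoc, ← Complex.exp_add]
      exact gen _ _ _ _ (by ring)
  have hδ : HasSum (fun ν : Fin n → ℕ => if ν = 0 then (1 / (p : ℂ)) else 0) (1 / (p : ℂ)) :=
    hasSum_ite_eq 0 (1 / (p : ℂ))
  have hGnorm : Summable (fun ν : Fin n → ℕ => ‖∏ i, f i (ν i)‖) := by
    apply hS.congr
    intro ν
    rw [norm_prod]
  have hb : Summable (fun ν : Fin n → ℕ => ‖1 - 1 / (p : ℂ)‖ * ‖∏ i, f i (ν i)‖ +
      (if ν = 0 then ‖(1 / (p : ℂ))‖ else 0)) :=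
    (hGnorm.mul_left _).add (hasSum_ite_eq 0 ‖(1 / (p : ℂ))‖).summable
  have hle : ∀ ν : Fin n → ℕ,
      ‖(Nat.totient (p ^ (∑ i, ν i)) : ℂ) * (p : ℂ) ^ (-(∑ i, (ν i : ℂ) * s i))‖ ≤
        ‖1 - 1 / (p : ℂ)‖ * ‖∏ i, f i (ν i)‖ + (if ν = 0 then ‖(1 / (p : ℂ))‖ else 0) := by
    intro ν
    rw [key ν]
    refine le_trans (norm_add_le _ _) (add_le_add (norm_mul _ _).le ?_)
    split <;> simp
  constructor
  · exact Summable.of_nonneg_of_le (fun ν => norm_nonneg _) hle hb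
  · have hmain : HasSum (fun ν : Fin n → ℕ =>
        (1 - 1 / (p : ℂ)) * ∏ i, f i (ν i) + (if ν = 0 then 1 / (p : ℂ) else 0))
        ((1 - 1 / (p : ℂ)) * ∏ i, (1 - x i)⁻¹ + 1 / (p : ℂ)) :=
      (hH.mul_left _).add hδ
    have hfe : (fun ν : Fin n → ℕ =>
        (Nat.totient (p ^ (∑ i, ν i)) : ℂ) * (p : ℂ) ^ (-(∑ i, (ν i : ℂ) * s i))) =
        fun ν => (1 - 1 / (p : ℂ)) * ∏ i, f i (ν i) + (if ν = 0 then 1 / (p : ℂ) else 0) :=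
      funext key
    rw [hfe]
    convert hmain using 1
    have hne : ∀ i, (1 - x i) ≠ 0 := by
      intro i h
      have hx1 : x i = 1 := by linear_combination -h
      have : ‖x i‖ = 1 := by simp [hx1]
      exact absurd this (ne_of_lt (hxnorm i))
    have hprodne : (∏ i, (1 - x i)) ≠ 0 := Finset.prod_ne_zero_iff.mpr fun i _ => hne i
    have hinveq : (∏ i, (1 - x i)⁻¹) = (∏ i, (1 - x i))⁻¹ := by
      rw [Finset.prod_inv_distrib]
    rw [hx] at hprodne hinveq ⊢
    rw [hinveq]
    field_simp
end
end

section
/- Let N ≥ 1, let a ∈ ℂ∖{0}, let α ∈ ℕ^N ∖ {0}, set P = a·X_1^{α_1}⋯X_N^{α_N} − 1 ∈ ℂ[X_1,…,X_N], and let g ∈ ℂ[X_1,…,X_N]. If g(x) = 0 for every x ∈ (ℂ∖{0})^N with a·x_1^{α_1}⋯x_N^{α_N} = 1, then P divides g in ℂ[X_1,…,X_N]. -/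
noncomputable section

open MvPolynomial

lemma ext_vanish (N : ℕ) (a : ℂ) (α : Fin N → ℕ) (g : MvPolynomial (Fin N) ℂ)
    (hg : ∀ x : Fin N → ℂ, (∀ i, x i ≠ 0) → a * ∏ i, x i ^ α i = 1 →
      MvPolynomial.eval x g = 0) :
    ∀ (n : ℕ) (x : Fin N → ℂ), (Finset.univ.filter (fun i => x i = 0)).card = n →
      a * ∏ i, x i ^ α i = 1 → MvPolynomial.eval x g = 0 := by
  intro n
  induction n with
  | zero =>
    intro x hcard hx
    refine hg x (fun i hi => ?_) hx
    have hm : (i : Fin N) ∈ Finset.univ.filter (fun i => x i = 0) := by simp [hi]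
    simp [Finset.card_eq_zero.mp hcard] at hm
  | succ n ih =>
    intro x hcard hx
    obtain ⟨i, hi⟩ : ∃ i, x i = 0 := by
      have h : (Finset.univ.filter (fun i => x i = 0)).Nonempty := by
        rw [← Finset.card_pos, hcard]; omega
      obtain ⟨i, hi⟩ := h
      exact ⟨i, (Finset.mem_filter.mp hi).2⟩
    have hαi : α i = 0 := by
      by_contra h
      have h0 : x i ^ α i = 0 := by simp [hi, zero_pow h]
      rw [Finset.prod_eq_zero (Finset.mem_univ i) h0, mul_zero] at hx
      exact one_ne_zero hx.symm
    set q : Polynomial ℂ :=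
      MvPolynomial.aeval (fun j => if j = i then Polynomial.X else Polynomial.C (x j)) g with hqdef
    have hq : ∀ t : ℂ, q.eval t = MvPolynomial.eval (Function.update x i t) g := by
      intro t
      have h : (Polynomial.evalRingHom t).comp
          ((MvPolynomial.aeval (fun j => if j = i then Polynomial.X else Polynomial.C (x j)) :
            MvPolynomial (Fin N) ℂ →ₐ[ℂ] Polynomial ℂ) : MvPolynomial (Fin N) ℂ →+* Polynomial ℂ)
          = MvPolynomial.eval (Function.update x i t) := by
        apply MvPolynomial.ringHom_ext
        · intro r; simp
        · intro j
          by_cases hj : j = i <;> simp [hj, Function.update]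
      exact RingHom.congr_fun h g
    have hq0 : ∀ t : ℂ, t ≠ 0 → q.eval t = 0 := by
      intro t ht
      rw [hq t]
      apply ih
      · have hfilter : Finset.univ.filter (fun j => Function.update x i t j = 0)
            = (Finset.univ.filter (fun j => x j = 0)).erase i := by
          ext j
          by_cases hj : j = i <;> simp [hj, Function.update, ht, hi]
        rw [hfilter, Finset.card_erase_of_mem (by simp [hi]), hcard]
        omega
      · rw [← hx]
        congr 1
        apply Finset.prod_congr rfl
        intro j _
        by_cases hj : j = i
        · simp [hj, hαi]
        · simp [Function.update, hj]
    have hq_zero : q = 0 := by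
      apply Polynomial.eq_zero_of_infinite_isRoot
      apply Set.Infinite.mono (s := {t : ℂ | t ≠ 0})
      · intro t ht; exact hq0 t ht
      · exact Set.Finite.infinite_compl (Set.finite_singleton 0)
    have hupd : Function.update x i 0 = x := by
      rw [← hi]; exact Function.update_eq_self i x
    have h0 := hq 0
    rw [hq_zero, hupd] at h0
    simpa using h0.symm

lemma sqfree_P (N : ℕ) (a : ℂ) (ha : a ≠ 0) (α : Fin N → ℕ) (hα : α ≠ 0) :
    Squarefree (MvPolynomial.C a * ∏ i, MvPolynomial.X i ^ α i - 1 : MvPolynomial (Fin N) ℂ) := by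
  set s : (Fin N) →₀ ℕ := Finsupp.equivFunOnFinite.symm α with hs
  have hsα : ∀ j, s j = α j := fun j => rfl
  have hprod : (∏ j, (MvPolynomial.X j : MvPolynomial (Fin N) ℂ) ^ α j) = monomial s 1 := by
    rw [monomial_eq, map_one, one_mul, Finsupp.prod_fintype]
    · exact (Finset.prod_congr rfl (fun j _ => by rw [hsα])).symm
    · intro j; exact pow_zero _
  set P : MvPolynomial (Fin N) ℂ := MvPolynomial.C a * ∏ i, MvPolynomial.X i ^ α i - 1 with hP
  have hP1 : P + 1 = monomial s a := by
    rw [hP, sub_add_cancel, hprod, C_mul_monomial, mul_one]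
  obtain ⟨i, hαi⟩ : ∃ i, α i ≠ 0 := Function.ne_iff.mp hα
  have hsi : 1 ≤ s i := by rw [hsα]; omega
  -- key identity
  have haux : Finsupp.single i 1 + (s - Finsupp.single i 1) = s := by
    ext j
    by_cases hj : j = i
    · subst hj
      simp only [Finsupp.add_apply, Finsupp.tsub_apply, Finsupp.single_eq_same]
      omega
    · simp [Finsupp.single_apply, Ne.symm hj, hj]
  have hkey : (X i : MvPolynomial (Fin N) ℂ) * pderiv i P = C (α i : ℂ) * (P + 1) := by
    have hPd : pderiv i P = monomial (s - Finsupp.single i 1) (a * s i) := by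
      rw [hP, hprod, C_mul_monomial, mul_one, map_sub, pderiv_monomial]
      simp
    rw [hPd, show (X i : MvPolynomial (Fin N) ℂ) = X i ^ 1 from (pow_one _).symm,
      ← monomial_single_add, haux, hP1, C_mul_monomial, hsα, mul_comm]
  intro z hz
  obtain ⟨r, hr⟩ := hz
  have hzP : z ∣ P := ⟨z * r, by rw [hr]; ring⟩
  have hzpd : z ∣ pderiv i P :=
    ⟨pderiv i z * r + pderiv i z * r + z * pderiv i r, by
      rw [hr, pderiv_mul, pderiv_mul]; ring⟩
  have h1 : z ∣ C (α i : ℂ) * (P + 1) := hkey ▸ hzpd.mul_left (X i)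
  have h2 : z ∣ C (α i : ℂ) := by
    have h3 : z ∣ C (α i : ℂ) * P := hzP.mul_left _
    have h4 : C (α i : ℂ) * (P + 1) - C (α i : ℂ) * P = C (α i : ℂ) := by ring
    exact h4 ▸ dvd_sub h1 h3
  exact isUnit_of_dvd_unit h2 ((isUnit_iff_ne_zero.mpr (by exact_mod_cast hαi : (α i : ℂ) ≠ 0)).map
    (MvPolynomial.C : ℂ →+* MvPolynomial (Fin N) ℂ))

theorem statement17 (N : ℕ) (hN : 1 ≤ N) (a : ℂ) (ha : a ≠ 0)
    (α : Fin N → ℕ) (hα : α ≠ 0) (g : MvPolynomial (Fin N) ℂ)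
    (hg : ∀ x : Fin N → ℂ, (∀ i, x i ≠ 0) → a * ∏ i, x i ^ α i = 1 →
      MvPolynomial.eval x g = 0) :
    (MvPolynomial.C a * ∏ i, MvPolynomial.X i ^ α i - 1) ∣ g := by
  set P : MvPolynomial (Fin N) ℂ := MvPolynomial.C a * ∏ i, MvPolynomial.X i ^ α i - 1 with hP
  have hmem : g ∈ vanishingIdeal ℂ (zeroLocus ℂ (Ideal.span {P})) := by
    rw [mem_vanishingIdeal_iff]
    intro x hx
    show MvPolynomial.eval x g = 0
    have hPx : MvPolynomial.eval x P = 0 := hx P (Ideal.subset_span rfl)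
    have hx1 : a * ∏ i, x i ^ α i = 1 := by
      rw [hP] at hPx
      simp only [map_sub, map_mul, map_prod, map_pow, eval_C, eval_X, map_one] at hPx
      linear_combination hPx
    exact ext_vanish N a α g hg _ x rfl hx1
  rw [vanishingIdeal_zeroLocus_eq_radical] at hmem
  obtain ⟨n, hn⟩ := Ideal.mem_radical_iff.mp hmem
  have hdvd : P ∣ g ^ n := Ideal.mem_span_singleton.mp hn
  rcases Nat.eq_zero_or_pos n with hn0 | hn0
  · subst hn0
    rw [pow_zero] at hdvd
    exact hdvd.trans (one_dvd g)
  · exact ((sqfree_P N a ha α hα).dvd_pow_iff_dvd (by omega)).mp hdvd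
end
end
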